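/- Let λ ≥ 2 and m ≥ 1, let the alphabet contain λ distinct letters a, b_1, …, b_{λ−1}, and let S = (a^m b_1)^2 (a^m b_2)^2 ⋯ (a^m b_{λ−1})^2 a^m. Let i_1, j_1, …, i_{λ−1}, j_{λ−1} be non-negative integers with 0 < i_1 + j_1 = i_2 + j_2 = ⋯ = i_{λ−1} + j_{λ−1} < m, and set s = i_1 + j_1. Then the family of λ strings (a^{i_1} b_1 a^{j_1}, …, a^{i_{λ−1}} b_{λ−1} a^{j_{λ−1}}, a^{s+1}) is a λ-cover of S consisting of strings all of length s + 1, and moreover no proper subfamily of these λ strings covers S (for each of the λ strings, some position of S lies within an occurrence of that string only). -/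

import Mathlib

/-!
STATEMENT 13: Let `λ ≥ 2` and `m ≥ 1`, let the alphabet contain `λ` distinct
letters `a, b_1, …, b_{λ−1}`, and let
`S = (a^m b_1)² (a^m b_2)² ⋯ (a^m b_{λ−1})² a^m`.
Let `i_1, j_1, …, i_{λ−1}, j_{λ−1}` be non-negative integers with
`0 < i_1 + j_1 = ⋯ = i_{λ−1} + j_{λ−1} < m`, and set `s = i_1 + j_1`.
Then the family of `λ` strings
`(a^{i_1} b_1 a^{j_1}, …, a^{i_{λ−1}} b_{λ−1} a^{j_{λ−1}}, a^{s+1})`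
is a `λ`-cover of `S` consisting of strings all of length `s + 1`, and no
proper subfamily covers `S`: for each of the `λ` strings, some position of
`S` lies within an occurrence of that string only.
Strings are modelled as lists; positions are 0-based.
-/

variable {α : Type*}

/-- `i` is a (0-based) starting position of an occurrence of `C` in `T`. -/
def IsOcc (T C : List α) (i : ℕ) : Prop :=
  i + C.length ≤ T.length ∧ (T.drop i).take C.length = C

/-- Position `p` (0-based) of `T` lies within an occurrence of `C` in `T`. -/
def CoveredPos (T C : List α) (p : ℕ) : Prop :=
  ∃ i, IsOcc T C i ∧ i ≤ p ∧ p < i + C.length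

lemma isOcc_of_eq {T C : List α} (u v : List α) (h : T = u ++ C ++ v) :
    IsOcc T C u.length := by
  subst h
  refine ⟨by simp only [List.length_append]; omega, ?_⟩
  rw [List.append_assoc, List.drop_left, List.take_left]

lemma coveredPos_of_eq {T C : List α} (u v : List α) (h : T = u ++ C ++ v)
    {p : ℕ} (h1 : u.length ≤ p) (h2 : p < u.length + C.length) :
    CoveredPos T C p := ⟨u.length, isOcc_of_eq u v h, h1, h2⟩

lemma coveredPos_shift {T C : List α} (u : List α) {p : ℕ} (h : CoveredPos T C p) :
    CoveredPos (u ++ T) C (u.length + p) := by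
  obtain ⟨q, ⟨hq1, hq2⟩, h1, h2⟩ := h
  refine ⟨u.length + q, ⟨by simp only [List.length_append]; omega, ?_⟩, by omega, by omega⟩
  rw [List.drop_append, List.drop_eq_nil_of_le (by omega), List.nil_append,
    Nat.add_sub_cancel_left]
  exact hq2

lemma mem_of_covered {T C : List α} {p : ℕ} (hp : p < T.length) (h : CoveredPos T C p) :
    T[p] ∈ C := by
  obtain ⟨q, ⟨hq1, hq2⟩, h1, h2⟩ := h
  have key := List.getElem_of_eq hq2 (i := p - q)
    (by rw [List.length_take, List.length_drop]; omega)
  rw [List.getElem_take, List.getElem_drop] at key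
  have key2 : T[p] = C[p - q]'(by omega) := by
    rw [← key]; congr 1; omega
  rw [key2]; exact List.getElem_mem _

lemma covered_replicate_prefix {a : α} {m s : ℕ} (rest : List α) (hsm : s < m)
    {p : ℕ} (hp : p < m) :
    CoveredPos (List.replicate m a ++ rest) (List.replicate (s+1) a) p := by
  set q := min p (m - (s+1)) with hq
  have hrep : List.replicate m a =
      List.replicate q a ++ List.replicate (s+1) a ++ List.replicate (m - q - (s+1)) a := by
    rw [← List.replicate_add, ← List.replicate_add]; congr 1; omega
  have hdec : List.replicate m a ++ rest =
      List.replicate q a ++ List.replicate (s+1) a ++ (List.replicate (m - q - (s+1)) a ++ rest) := by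
    conv_lhs => rw [hrep]
    rw [List.append_assoc]
  have := coveredPos_of_eq _ _ hdec (p := p) (by simp only [List.length_replicate]; omega)
    (by simp only [List.length_replicate]; omega)
  simpa using this

lemma flatMap_head_replicate {β : Type*} (a : α) (m : ℕ) (g : β → α) (l : List β) :
    ∃ r, (l.flatMap fun x => List.replicate m a ++ [g x]) ++ List.replicate m a =
      List.replicate m a ++ r := by
  cases l with
  | nil => exact ⟨[], by simp⟩
  | cons x xs =>
    exact ⟨[g x] ++ ((xs.flatMap fun y => List.replicate m a ++ [g y]) ++ List.replicate m a),
      by simp [List.flatMap_cons, List.append_assoc]⟩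

lemma cover_all {β : Type*} (a : α) (m s : ℕ) (hs0 : 0 < s) (hsm : s < m)
    (g : β → α) (i j : β → ℕ) (hij : ∀ x, i x + j x = s) :
    ∀ (l : List β) (p : ℕ),
      p < ((l.flatMap fun x => List.replicate m a ++ [g x]) ++ List.replicate m a).length →
      CoveredPos ((l.flatMap fun x => List.replicate m a ++ [g x]) ++ List.replicate m a)
        (List.replicate (s+1) a) p ∨
      ∃ x ∈ l, CoveredPos ((l.flatMap fun x => List.replicate m a ++ [g x]) ++ List.replicate m a)
        (List.replicate (i x) a ++ [g x] ++ List.replicate (j x) a) p := by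
  intro l
  induction l with
  | nil =>
    intro p hp
    left
    simp only [List.flatMap_nil, List.nil_append] at hp ⊢
    have hpm : p < m := by simpa using hp
    simpa using covered_replicate_prefix (a := a) [] hsm hpm
  | cons x xs ih =>
    intro p hp
    have hT : ((x :: xs).flatMap fun y => List.replicate m a ++ [g y]) ++ List.replicate m a
        = (List.replicate m a ++ [g x]) ++
          ((xs.flatMap fun y => List.replicate m a ++ [g y]) ++ List.replicate m a) := by
      simp [List.flatMap_cons, List.append_assoc]
    rcases Nat.lt_trichotomy p m with h | h | h
    · left
      rw [hT, List.append_assoc]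
      exact covered_replicate_prefix _ hsm h
    · right
      refine ⟨x, by simp, ?_⟩
      obtain ⟨r, hr⟩ := flatMap_head_replicate a m g xs
      have hijx : i x + j x = s := hij x
      have e1 : List.replicate m a = List.replicate (m - i x) a ++ List.replicate (i x) a := by
        rw [← List.replicate_add]; congr 1; omega
      have e2 : List.replicate m a = List.replicate (j x) a ++ List.replicate (m - j x) a := by
        rw [← List.replicate_add]; congr 1; omega
      have hdec : ((x :: xs).flatMap fun y => List.replicate m a ++ [g y]) ++ List.replicate m a
          = List.replicate (m - i x) a ++
            (List.replicate (i x) a ++ [g x] ++ List.replicate (j x) a) ++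
            (List.replicate (m - j x) a ++ r) := by
        rw [hT, List.append_assoc, hr]
        nth_rewrite 1 [e1]
        rw [e2]
        simp only [List.append_assoc, List.singleton_append, List.cons_append]
      refine coveredPos_of_eq _ _ hdec ?_ ?_ <;>
        simp only [List.length_replicate, List.length_append, List.length_cons,
          List.length_nil] <;> omega
    · -- p > m : use IH with shift
      have hlen : ((x :: xs).flatMap fun y => List.replicate m a ++ [g y]) ++ List.replicate m a
          = (List.replicate m a ++ [g x]) ++
            ((xs.flatMap fun y => List.replicate m a ++ [g y]) ++ List.replicate m a) := hT
      have hp' : p - (m+1) <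
          ((xs.flatMap fun y => List.replicate m a ++ [g y]) ++ List.replicate m a).length := by
        rw [hlen] at hp
        simp only [List.length_append, List.length_replicate, List.length_cons,
          List.length_nil] at hp ⊢
        omega
      have hu : (List.replicate m a ++ [g x]).length = m + 1 := by simp
      have hpe : p = (List.replicate m a ++ [g x]).length + (p - (m+1)) := by rw [hu]; omega
      rcases ih (p - (m+1)) hp' with h' | ⟨y, hy, h'⟩
      · left; rw [hT, hpe]; exact coveredPos_shift _ h'
      · right; exact ⟨y, by simp [hy], by rw [hT, hpe]; exact coveredPos_shift _ h'⟩

lemma getElem_eq_of_eq {T u v : List α} {y : α} (h : T = u ++ y :: v) {n : ℕ}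
    (hn : n = u.length) (hlt : n < T.length) : T[n] = y := by
  subst h hn
  rw [List.getElem_append_right (Nat.le_refl _)]
  simp

lemma double_flatMap {β γ : Type*} (l : List β) (f : β → List γ) :
    (l.flatMap fun t => [t, t]).flatMap f = l.flatMap fun t => f t ++ f t := by
  induction l with
  | nil => simp
  | cons x xs ih => simp [ih]

theorem lambda_cover_example (lam m : ℕ) (hlam : 2 ≤ lam) (hm : 1 ≤ m)
    (a : α) (b : Fin (lam - 1) → α)
    (hab : ∀ t, b t ≠ a) (hbinj : Function.Injective b)
    (i j : Fin (lam - 1) → ℕ) (s : ℕ)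
    (hsum : ∀ t, i t + j t = s) (hs0 : 0 < s) (hsm : s < m)
    (S : List α)
    (hS : S = ((List.finRange (lam - 1)).flatMap fun t =>
        (List.replicate m a ++ [b t]) ++ (List.replicate m a ++ [b t])) ++
        List.replicate m a)
    (Cs : List (List α))
    (hCs : Cs = ((List.finRange (lam - 1)).map fun t =>
        List.replicate (i t) a ++ [b t] ++ List.replicate (j t) a) ++
        [List.replicate (s + 1) a]) :
    (∀ C ∈ Cs, C.length = s + 1) ∧
    (∀ p, p < S.length → ∃ C ∈ Cs, CoveredPos S C p) ∧
    (∀ C ∈ Cs, ∃ p, p < S.length ∧ CoveredPos S C p ∧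
      ∀ C' ∈ Cs, C' ≠ C → ¬ CoveredPos S C' p) := by
  -- S rewritten via doubled index list
  have hS2 : S = (((List.finRange (lam - 1)).flatMap fun t => [t, t]).flatMap
      fun t => List.replicate m a ++ [b t]) ++ List.replicate m a := by
    rw [hS, double_flatMap]
  -- S starts with replicate m a
  obtain ⟨r0, hr0⟩ : ∃ r0, S = List.replicate m a ++ r0 := by
    rw [hS2]; exact flatMap_head_replicate a m b _
  refine ⟨?_, ?_, ?_⟩
  · -- lengths
    intro C hC
    rw [hCs] at hC
    rcases List.mem_append.1 hC with h | h
    · obtain ⟨t, -, rfl⟩ := List.mem_map.1 h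
      have := hsum t
      simp only [List.length_append, List.length_replicate, List.length_cons, List.length_nil]
      omega
    · rw [List.mem_singleton.1 h]; simp
  · -- coverage
    intro p hp
    rcases cover_all a m s hs0 hsm b i j hsum ((List.finRange (lam - 1)).flatMap fun t => [t, t])
        p (by rw [← hS2]; exact hp) with h | ⟨t, -, h⟩
    · exact ⟨List.replicate (s + 1) a, by rw [hCs]; simp, by rw [hS2]; exact h⟩
    · refine ⟨List.replicate (i t) a ++ [b t] ++ List.replicate (j t) a, ?_, by rw [hS2]; exact h⟩
      rw [hCs]
      exact List.mem_append.2 (Or.inl (List.mem_map.2 ⟨t, List.mem_finRange t, rfl⟩))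
  · -- uniqueness
    intro C hC
    rw [hCs] at hC
    rcases List.mem_append.1 hC with h | h
    · -- C = pattern of t
      obtain ⟨t, -, rfl⟩ := List.mem_map.1 h
      obtain ⟨l₁, l₂, hsplit⟩ := List.append_of_mem (List.mem_finRange t)
      set A := l₁.flatMap fun t' => (List.replicate m a ++ [b t']) ++ (List.replicate m a ++ [b t'])
        with hA
      set B := (l₂.flatMap fun t' => (List.replicate m a ++ [b t']) ++ (List.replicate m a ++ [b t'])) ++
        List.replicate m a with hB
      have hSd : S = A ++ (List.replicate m a ++ [b t] ++ (List.replicate m a ++ [b t])) ++ B := by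
      -- A ++ rep m a ++ [b t] ++ rep m a ++ [b t] ++ B
        rw [hS, hsplit, List.flatMap_append, List.flatMap_cons]
        simp only [hA, hB, List.append_assoc]
      refine ⟨A.length + m, ?_, ?_, ?_⟩
      · rw [hSd]
        simp only [List.length_append, List.length_replicate, List.length_cons, List.length_nil]
        omega
      · -- CoveredPos S (pattern t) (A.length + m)
        have hit : i t + j t = s := hsum t
        have e1 : List.replicate m a = List.replicate (m - i t) a ++ List.replicate (i t) a := by
          rw [← List.replicate_add]; congr 1; omega
        have e2 : List.replicate m a = List.replicate (j t) a ++ List.replicate (m - j t) a := by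
          rw [← List.replicate_add]; congr 1; omega
        have hdec : S = (A ++ List.replicate (m - i t) a) ++
            (List.replicate (i t) a ++ [b t] ++ List.replicate (j t) a) ++
            (List.replicate (m - j t) a ++ [b t] ++ B) := by
          rw [hSd]
          nth_rewrite 1 [e1]
          rw [e2]
          simp only [List.append_assoc, List.singleton_append, List.cons_append]
        refine coveredPos_of_eq _ _ hdec ?_ ?_ <;>
          simp only [List.length_append, List.length_replicate, List.length_cons,
            List.length_nil] <;> omega
      · -- no other C' covers p
        intro C' hC' hne hcov
        have hplt : A.length + m < S.length := by
          rw [hSd]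
          simp only [List.length_append, List.length_replicate, List.length_cons, List.length_nil]
          omega
        have hSp : S[A.length + m]'hplt = b t := by
          refine getElem_eq_of_eq (u := A ++ List.replicate m a)
            (v := List.replicate m a ++ [b t] ++ B) ?_ (by simp) hplt
          rw [hSd]
          simp only [List.append_assoc, List.singleton_append, List.cons_append,
            List.nil_append]
        have hmem := mem_of_covered hplt hcov
        rw [hSp] at hmem
        rw [hCs] at hC'
        rcases List.mem_append.1 hC' with h' | h'
        · obtain ⟨t', -, rfl⟩ := List.mem_map.1 h'
          simp only [List.mem_append, List.mem_replicate, List.mem_singleton] at hmem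
          rcases hmem with (⟨-, hba⟩ | hbb) | ⟨-, hba⟩
          · exact hab t hba
          · exact hne (by rw [hbinj hbb])
          · exact hab t hba
        · rw [List.mem_singleton.1 h'] at hmem
          exact hab t (List.eq_of_mem_replicate hmem)
    · -- C = replicate (s+1) a
      rw [List.mem_singleton.1 h]
      refine ⟨0, ?_, ?_, ?_⟩
      · rw [hr0]; simp only [List.length_append, List.length_replicate]; omega
      · rw [hr0]; exact covered_replicate_prefix r0 hsm (by omega)
      · intro C' hC' hne hcov
        rw [hCs] at hC'
        rcases List.mem_append.1 hC' with h' | h'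
        · obtain ⟨t', -, rfl⟩ := List.mem_map.1 h'
          obtain ⟨q, ⟨hq1, hq2⟩, hq0, -⟩ := hcov
          have hq : q = 0 := by omega
          subst hq
          rw [List.drop_zero] at hq2
          have hlen : (List.replicate (i t') a ++ [b t'] ++ List.replicate (j t') a).length
              = s + 1 := by
            have := hsum t'
            simp only [List.length_append, List.length_replicate, List.length_cons,
              List.length_nil]
            omega
          have htake : S.take (s + 1) = List.replicate (s + 1) a := by
            rw [hr0, List.take_append_of_le_length (by simp; omega), List.take_replicate]
            congr 1; omega
          have hC'eq : List.replicate (i t') a ++ [b t'] ++ List.replicate (j t') a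
              = List.replicate (s + 1) a := by
            rw [← hq2, hlen, htake]
          have : b t' ∈ List.replicate (s + 1) a := by
            rw [← hC'eq]; simp
          exact hab t' (List.eq_of_mem_replicate this)
        · exact hne (List.mem_singleton.1 h')
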